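/- arXiv:2309.09182 — 3 statements merged into one kernel-verified Lean document; each statement's English description precedes it below -/
import Mathlib

section
/- The LTL heuristic h_LTL(s,q) = min over t ∈ V of [c(s,t) + g(ℓ(t), T(q, ℓ(t)))] is consistent in the case where the automaton state does not change: if T(q_x, ℓ(s_y)) = q_x, then h_LTL(s_x, q_x) ≤ c(s_x, s_y) + h_LTL(s_y, q_x). -/
/-- The LTL heuristic `h_LTL(s,q) = min_{t∈V} [c(s,t) + g(ℓ(t), T(q, ℓ(t)))]` is
consistent in the case where the automaton state does not change:
if `T(q_x, ℓ(s_y)) = q_x`, then `h_LTL(s_x, q_x) ≤ c(s_x, s_y) + h_LTL(s_y, q_x)`. -/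
theorem stmt2 {V L Q : Type*} [Fintype V] [Nonempty V] [Fintype L] [Fintype Q]
    (ℓ : V → L) (c : V → V → ℝ)
    (hc0 : ∀ s t : V, 0 ≤ c s t)
    (htri : ∀ s s' s'' : V, c s s' ≤ c s s'' + c s'' s')
    (T : Q → L → Q) (g : L → Q → ℝ) (hg0 : ∀ l q, 0 ≤ g l q)
    (hLTL : V → Q → ℝ)
    (hdef : ∀ (s : V) (q : Q),
      hLTL s q = Finset.univ.inf' Finset.univ_nonempty
        (fun t : V => c s t + g (ℓ t) (T q (ℓ t))))
    (s_x s_y : V) (q_x : Q) (hstay : T q_x (ℓ s_y) = q_x) :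
    hLTL s_x q_x ≤ c s_x s_y + hLTL s_y q_x := by
  rw [hdef, hdef]
  obtain ⟨t, -, ht⟩ := Finset.exists_mem_eq_inf' (Finset.univ_nonempty (α := V))
    (fun t : V => c s_y t + g (ℓ t) (T q_x (ℓ t)))
  rw [ht]
  calc Finset.univ.inf' Finset.univ_nonempty
        (fun t : V => c s_x t + g (ℓ t) (T q_x (ℓ t)))
      ≤ c s_x t + g (ℓ t) (T q_x (ℓ t)) :=
        Finset.inf'_le _ (Finset.mem_univ t)
    _ ≤ c s_x s_y + (c s_y t + g (ℓ t) (T q_x (ℓ t))) := by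
        have := htri s_x t s_y
        linarith
end

section
/- The full consistency theorem for the LTL heuristic: for all nodes s_x, s_y ∈ V and automaton states q_x ∈ Q, letting q_y = T(q_x, ℓ(s_y)), it holds that h_LTL(s_x, q_x) ≤ c(s_x, s_y) + h_LTL(s_y, q_y). -/
/-- Full consistency theorem for the LTL heuristic: for all nodes `s_x, s_y` and
automaton states `q_x`, letting `q_y = T(q_x, ℓ(s_y))`,
`h_LTL(s_x, q_x) ≤ c(s_x, s_y) + h_LTL(s_y, q_y)`. -/
theorem stmt4 {V L Q : Type*} [Fintype V] [Nonempty V] [Fintype L] [Nonempty L] [Fintype Q]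
    (ℓ : V → L) (hsurj : Function.Surjective ℓ)
    (c : V → V → ℝ)
    (hc0 : ∀ s t : V, 0 ≤ c s t)
    (htri : ∀ s s' s'' : V, c s s' ≤ c s s'' + c s'' s')
    (T : Q → L → Q) (F : Set Q)
    (cℓ : L → L → ℝ)
    (hcℓ : ∀ l₁ l₂ : L,
      IsLeast {x : ℝ | ∃ s₁ s₂, ℓ s₁ = l₁ ∧ ℓ s₂ = l₂ ∧ c s₁ s₂ = x} (cℓ l₁ l₂))
    (g : L → Q → ℝ) (hg0 : ∀ l q, 0 ≤ g l q)
    (hgF : ∀ (l : L) (q : Q), q ∈ F → g l q = 0)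
    (hgBell : ∀ (l : L) (q : Q), q ∉ F →
      g l q = Finset.univ.inf' Finset.univ_nonempty
        (fun l' : L => cℓ l l' + g l' (T q l')))
    (hLTL : V → Q → ℝ)
    (hhF : ∀ (s : V) (q : Q), q ∈ F → hLTL s q = 0)
    (hhdef : ∀ (s : V) (q : Q), q ∉ F →
      hLTL s q = Finset.univ.inf' Finset.univ_nonempty
        (fun t : V => c s t + g (ℓ t) (T q (ℓ t)))) :
    ∀ (s_x s_y : V) (q_x : Q),
      hLTL s_x q_x ≤ c s_x s_y + hLTL s_y (T q_x (ℓ s_y)) := by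
  have hnn : ∀ s q, 0 ≤ hLTL s q := by
    intro s q
    by_cases hq : q ∈ F
    · rw [hhF s q hq]
    · rw [hhdef s q hq]
      exact Finset.le_inf' _ _ fun t _ => add_nonneg (hc0 s t) (hg0 _ _)
  intro s_x s_y q_x
  by_cases hx : q_x ∈ F
  · rw [hhF s_x q_x hx]
    have := hc0 s_x s_y
    have := hnn s_y (T q_x (ℓ s_y))
    linarith
  · rw [hhdef s_x q_x hx]
    have h1 : Finset.univ.inf' Finset.univ_nonempty
        (fun t : V => c s_x t + g (ℓ t) (T q_x (ℓ t)))
        ≤ c s_x s_y + g (ℓ s_y) (T q_x (ℓ s_y)) :=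
      Finset.inf'_le _ (Finset.mem_univ s_y)
    set q_y := T q_x (ℓ s_y) with hqy
    have h2 : g (ℓ s_y) q_y ≤ hLTL s_y q_y := by
      by_cases hy : q_y ∈ F
      · rw [hhF s_y q_y hy, hgF (ℓ s_y) q_y hy]
      · rw [hhdef s_y q_y hy]
        refine Finset.le_inf' _ _ fun t _ => ?_
        have h3 : g (ℓ s_y) q_y ≤ cℓ (ℓ s_y) (ℓ t) + g (ℓ t) (T q_y (ℓ t)) := by
          rw [hgBell (ℓ s_y) q_y hy]
          exact Finset.inf'_le _ (Finset.mem_univ (ℓ t))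
        have h4 : cℓ (ℓ s_y) (ℓ t) ≤ c s_y t :=
          (hcℓ (ℓ s_y) (ℓ t)).2 ⟨s_y, t, rfl, rfl, rfl⟩
        linarith
    linarith
end

section
/- The LTL heuristic lower-bounds the optimal cost-to-goal in the product graph: for any path (s₁,q₁), ..., (s_T, q_T) in the product of the scene graph and automaton (with q_{t+1} = T(q_t, ℓ(s_{t+1})) and edges of cost c(s_t, s_{t+1})) ending at a state with q_T ∈ F, we have h_LTL(s₁, q₁) ≤ Σ_{t=1}^{T-1} c(s_t, s_{t+1}). -/
/-- The LTL heuristic lower-bounds the optimal cost-to-goal in the product graph: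
for any product path `(s₁,q₁),…,(s_T,q_T)` with `q_{t+1} = T(q_t, ℓ(s_{t+1}))`
ending with `q_T ∈ F`, `h_LTL(s₁,q₁) ≤ Σ c(s_t, s_{t+1})`. -/
theorem stmt7 {V L Q : Type*} [Fintype V] [Nonempty V] [Fintype L] [Nonempty L] [Fintype Q]
    (ℓ : V → L) (hsurj : Function.Surjective ℓ)
    (c : V → V → ℝ)
    (hc0 : ∀ s t : V, 0 ≤ c s t)
    (htri : ∀ s s' s'' : V, c s s' ≤ c s s'' + c s'' s')
    (T : Q → L → Q) (F : Set Q)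
    (cℓ : L → L → ℝ)
    (hcℓ : ∀ l₁ l₂ : L,
      IsLeast {x : ℝ | ∃ s₁ s₂, ℓ s₁ = l₁ ∧ ℓ s₂ = l₂ ∧ c s₁ s₂ = x} (cℓ l₁ l₂))
    (g : L → Q → ℝ) (hg0 : ∀ l q, 0 ≤ g l q)
    (hgF : ∀ (l : L) (q : Q), q ∈ F → g l q = 0)
    (hgBell : ∀ (l : L) (q : Q), q ∉ F →
      g l q = Finset.univ.inf' Finset.univ_nonempty
        (fun l' : L => cℓ l l' + g l' (T q l')))
    (hLTL : V → Q → ℝ)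
    (hhF : ∀ (s : V) (q : Q), q ∈ F → hLTL s q = 0)
    (hhdef : ∀ (s : V) (q : Q), q ∉ F →
      hLTL s q = Finset.univ.inf' Finset.univ_nonempty
        (fun t : V => c s t + g (ℓ t) (T q (ℓ t)))) :
    ∀ (n : ℕ) (s : ℕ → V) (q : ℕ → Q),
      (∀ t < n, q (t + 1) = T (q t) (ℓ (s (t + 1)))) → q n ∈ F →
      hLTL (s 0) (q 0) ≤ ∑ t ∈ Finset.range n, c (s t) (s (t + 1)) := by
  have hcℓ_le : ∀ a b : V, cℓ (ℓ a) (ℓ b) ≤ c a b := fun a b =>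
    (hcℓ (ℓ a) (ℓ b)).2 ⟨a, b, rfl, rfl, rfl⟩
  -- key lemma for g
  have key : ∀ (m : ℕ) (s : ℕ → V) (q : ℕ → Q),
      (∀ t < m, q (t + 1) = T (q t) (ℓ (s (t + 1)))) → q m ∈ F →
      g (ℓ (s 0)) (q 0) ≤ ∑ t ∈ Finset.range m, c (s t) (s (t + 1)) := by
    intro m
    induction m with
    | zero =>
      intro s q _ hF
      simp [hgF _ _ hF]
    | succ m ih =>
      intro s q hstep hF
      by_cases h0 : q 0 ∈ F
      · rw [hgF _ _ h0]
        exact Finset.sum_nonneg fun i _ => hc0 _ _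
      · rw [hgBell _ _ h0]
        have h1 : g (ℓ (s 1)) (q 1) ≤ ∑ t ∈ Finset.range m, c (s (t + 1)) (s (t + 2)) := by
          apply ih (fun t => s (t + 1)) (fun t => q (t + 1))
          · intro t ht
            exact hstep (t + 1) (by omega)
          · exact hF
        calc Finset.univ.inf' Finset.univ_nonempty
              (fun l' : L => cℓ (ℓ (s 0)) l' + g l' (T (q 0) l'))
            ≤ cℓ (ℓ (s 0)) (ℓ (s 1)) + g (ℓ (s 1)) (T (q 0) (ℓ (s 1))) :=
              Finset.inf'_le _ (Finset.mem_univ _)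
          _ ≤ c (s 0) (s 1) + g (ℓ (s 1)) (q 1) := by
              rw [← hstep 0 (by omega)]
              exact add_le_add_left (hcℓ_le _ _) _
          _ ≤ c (s 0) (s 1) + ∑ t ∈ Finset.range m, c (s (t + 1)) (s (t + 2)) :=
              add_le_add_right h1 _
          _ = ∑ t ∈ Finset.range (m + 1), c (s t) (s (t + 1)) := by
              rw [Finset.sum_range_succ', add_comm]
  intro n s q hstep hF
  by_cases h0 : q 0 ∈ F
  · rw [hhF _ _ h0]
    exact Finset.sum_nonneg fun i _ => hc0 _ _
  · have hn : n ≠ 0 := by rintro rfl; exact h0 hF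
    obtain ⟨m, rfl⟩ := Nat.exists_eq_succ_of_ne_zero hn
    rw [hhdef _ _ h0]
    have h1 : g (ℓ (s 1)) (q 1) ≤ ∑ t ∈ Finset.range m, c (s (t + 1)) (s (t + 2)) := by
      apply key m (fun t => s (t + 1)) (fun t => q (t + 1))
      · intro t ht; exact hstep (t + 1) (by omega)
      · exact hF
    calc Finset.univ.inf' Finset.univ_nonempty
          (fun t : V => c (s 0) t + g (ℓ t) (T (q 0) (ℓ t)))
        ≤ c (s 0) (s 1) + g (ℓ (s 1)) (T (q 0) (ℓ (s 1))) :=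
          Finset.inf'_le _ (Finset.mem_univ _)
      _ ≤ c (s 0) (s 1) + ∑ t ∈ Finset.range m, c (s (t + 1)) (s (t + 2)) := by
          rw [← hstep 0 (by omega)]
          exact add_le_add_right h1 _
      _ = ∑ t ∈ Finset.range (m + 1), c (s t) (s (t + 1)) := by
          rw [Finset.sum_range_succ', add_comm]
end
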